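/- arXiv:0806.0176 — 4 statements merged into one kernel-verified Lean document; each statement's English description precedes it below -/
import Mathlib

section
/- In the ring C := k[x_n : n ∈ ℤ]/(x_n² + n − x_m² − m), for finite subsets I, J, I', J' of ℤ we have x_I x_J = x_{I'} x_{J'} if and only if I ∩ J = I' ∩ J' and I ∪ J = I' ∪ J'. -/
open scoped symmDiff

noncomputable section

/-- The ring `C = k[x_n : n ∈ ℤ] / (x_n² + n = x_m² + m)`. -/
abbrev WeylC (k : Type) [Field k] : Type :=
  MvPolynomial ℤ k ⧸ Ideal.span { p : MvPolynomial ℤ k |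
    ∃ m n : ℤ, p = MvPolynomial.X n ^ 2 + (n : MvPolynomial ℤ k)
      - MvPolynomial.X m ^ 2 - (m : MvPolynomial ℤ k) }

variable (k : Type) [Field k]

/-- The generator `x_n` of `C`. -/
def xC (n : ℤ) : WeylC k := Ideal.Quotient.mk _ (MvPolynomial.X n)

/-- `x_I := ∏_{i ∈ I} x_i` for a finite subset `I ⊆ ℤ` (with `x_∅ = 1`). -/
def xS (I : Finset ℤ) : WeylC k := ∏ i ∈ I, xC k i

/-- The identity component `C_∅ = k[x_0²]`. -/
def Cphi : Subalgebra k (WeylC k) := Algebra.adjoin k {xC k 0 ^ 2}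

/-- The homogeneous component `C_I = C_∅ · x_I` of the `ℤ_fin`-grading on `C`. -/
def Cgrade (I : Finset ℤ) : Submodule k (WeylC k) :=
  (Cphi k).toSubmodule.map (LinearMap.mulRight k (xS k I))

namespace WeylAux

open Polynomial

/-- The algebraic closure of `k(t)`. -/
abbrev F : Type := AlgebraicClosure (RatFunc k)

/-- Embedding of `k[t]` into `F`. -/
def emb : Polynomial k →+* F k :=
  (algebraMap (RatFunc k) (F k)).comp (algebraMap (Polynomial k) (RatFunc k))

lemma emb_injective : Function.Injective (emb k) :=
  (algebraMap (RatFunc k) (F k)).injective.comp (IsFractionRing.injective _ _)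

/-- The image of `t` in `F`. -/
def tF : F k := emb k X

lemma exists_sq (n : ℤ) : ∃ z : F k, z ^ 2 = tF k - n :=
  IsAlgClosed.exists_pow_nat_eq _ (by norm_num)

/-- A chosen square root of `t - n` in `F`. -/
def sq (n : ℤ) : F k := (exists_sq k n).choose

lemma sq_sq (n : ℤ) : sq k n ^ 2 = tF k - n := (exists_sq k n).choose_spec

/-- `∏_{n ∈ A} (t - n)` as a polynomial. -/
def pZ (A : Finset ℤ) : Polynomial k := ∏ n ∈ A, (X - C (n : k))

lemma pZ_monic (A : Finset ℤ) : (pZ k A).Monic :=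
  monic_prod_of_monic _ _ fun n _ => monic_X_sub_C _

lemma pZ_ne_zero (A : Finset ℤ) : pZ k A ≠ 0 := (pZ_monic k A).ne_zero

lemma emb_factor (n : ℤ) : emb k (X - C (n : k)) = tF k - n := by
  rw [map_sub, tF]
  congr 1
  rw [show (C ((n : ℤ) : k)) = ((n : ℤ) : Polynomial k) from map_intCast (C : k →+* Polynomial k) n,
    map_intCast]

lemma prod_sq (A : Finset ℤ) : (∏ n ∈ A, sq k n) ^ 2 = emb k (pZ k A) := by
  rw [pZ, map_prod, ← Finset.prod_pow]
  exact Finset.prod_congr rfl fun n _ => by rw [sq_sq, emb_factor]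

lemma prod_mul_prod (I J : Finset ℤ) :
    (∏ n ∈ I, sq k n) * ∏ n ∈ J, sq k n
      = emb k (pZ k (I ∩ J)) * ∏ n ∈ I ∆ J, sq k n := by
  have h1 : I ∪ J = (I ∩ J) ∪ (I ∆ J) := by
    ext a
    simp only [Finset.mem_union, Finset.mem_inter, Finset.mem_symmDiff]
    tauto
  have h2 : Disjoint (I ∩ J) (I ∆ J) := by
    rw [Finset.disjoint_left]
    intro a ha hb
    rw [Finset.mem_inter] at ha
    rw [Finset.mem_symmDiff] at hb
    tauto
  rw [← Finset.prod_union_inter, h1, Finset.prod_union h2, ← prod_sq]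
  ring

/-- The evaluation ring hom `MvPolynomial ℤ k →+* F` sending `X n` to `sq n`. -/
def ev : MvPolynomial ℤ k →+* F k :=
  MvPolynomial.eval₂Hom ((emb k).comp (C : k →+* Polynomial k)) (sq k)

lemma ev_vanish : Ideal.span { p : MvPolynomial ℤ k |
    ∃ m n : ℤ, p = MvPolynomial.X n ^ 2 + (n : MvPolynomial ℤ k)
      - MvPolynomial.X m ^ 2 - (m : MvPolynomial ℤ k) } ≤ RingHom.ker (ev k) := by
  rw [Ideal.span_le]
  rintro p ⟨m, n, rfl⟩
  simp only [SetLike.mem_coe, RingHom.mem_ker, map_sub, map_add, map_pow, map_intCast]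
  rw [show (ev k) (MvPolynomial.X n) = sq k n from MvPolynomial.eval₂Hom_X' _ _ _,
    show (ev k) (MvPolynomial.X m) = sq k m from MvPolynomial.eval₂Hom_X' _ _ _,
    sq_sq, sq_sq]
  ring

/-- The induced ring hom `C →+* F`. -/
def phi : WeylC k →+* F k :=
  Ideal.Quotient.lift _ (ev k) fun a ha => RingHom.mem_ker.mp (ev_vanish k ha)

lemma phi_xC (n : ℤ) : phi k (xC k n) = sq k n := by
  rw [xC, phi, Ideal.Quotient.lift_mk]
  exact MvPolynomial.eval₂Hom_X' _ _ _

lemma phi_xS (I : Finset ℤ) : phi k (xS k I) = ∏ n ∈ I, sq k n := by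
  rw [xS, map_prod]
  exact Finset.prod_congr rfl fun n _ => phi_xC k n

lemma roots_pZ (A : Finset ℤ) : (pZ k A).roots = A.val.map (fun n : ℤ => (n : k)) := by
  have h : pZ k A = ((A.val.map (fun n : ℤ => (n : k))).map (fun r => X - C r)).prod := by
    rw [pZ, Finset.prod_eq_multiset_prod, Multiset.map_map]
    rfl
  rw [h, roots_multiset_prod_X_sub_C]

variable [CharZero k]

lemma cast_inj : Function.Injective (fun n : ℤ => (n : k)) := fun x y h => by
  simpa using Int.cast_injective (α := k) h

lemma count_roots_pZ [DecidableEq k] (A : Finset ℤ) (a : ℤ) :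
    (pZ k A).roots.count ((a : k)) = if a ∈ A then 1 else 0 := by
  rw [roots_pZ, Multiset.count_map_eq_count' _ _ (cast_inj k)]
  split_ifs with h
  · exact Multiset.count_eq_one_of_mem A.nodup h
  · exact Multiset.count_eq_zero_of_notMem h

lemma pZ_injective {A A' : Finset ℤ} (h : pZ k A = pZ k A') : A = A' := by
  have h2 := congrArg Polynomial.roots h
  rw [roots_pZ, roots_pZ] at h2
  exact Finset.val_injective (Multiset.map_injective (cast_inj k) h2)

end WeylAux

variable [CharZero k]

/-- In `C`, `x_I x_J = x_{I'} x_{J'}` if and only if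
`I ∩ J = I' ∩ J'` and `I ∪ J = I' ∪ J'`. -/
theorem xS_mul_eq_iff (I J I' J' : Finset ℤ) :
    xS k I * xS k J = xS k I' * xS k J' ↔ I ∩ J = I' ∩ J' ∧ I ∪ J = I' ∪ J' := by
  constructor
  · intro h
    have hphi := congrArg (WeylAux.phi k) h
    rw [map_mul, map_mul, WeylAux.phi_xS, WeylAux.phi_xS, WeylAux.phi_xS, WeylAux.phi_xS,
      WeylAux.prod_mul_prod, WeylAux.prod_mul_prod] at hphi
    set A := I ∩ J with hA
    set B := I ∆ J with hB
    set A' := I' ∩ J' with hA'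
    set B' := I' ∆ J' with hB'
    -- multiply both sides by ∏_{B'} sq
    have h2 : WeylAux.emb k (WeylAux.pZ k A)
          * ((∏ n ∈ B, WeylAux.sq k n) * ∏ n ∈ B', WeylAux.sq k n)
        = WeylAux.emb k (WeylAux.pZ k A')
          * ((∏ n ∈ B', WeylAux.sq k n) * ∏ n ∈ B', WeylAux.sq k n) := by
      linear_combination (∏ n ∈ B', WeylAux.sq k n) * hphi
    rw [WeylAux.prod_mul_prod,
      show (∏ n ∈ B', WeylAux.sq k n) * ∏ n ∈ B', WeylAux.sq k n
        = (∏ n ∈ B', WeylAux.sq k n) ^ 2 from (pow_two _).symm,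
      WeylAux.prod_sq] at h2
    -- square both sides
    have h3 : WeylAux.emb k ((WeylAux.pZ k A * WeylAux.pZ k (B ∩ B')) ^ 2
          * WeylAux.pZ k (B ∆ B'))
        = WeylAux.emb k ((WeylAux.pZ k A' * WeylAux.pZ k B') ^ 2) := by
      rw [map_mul, map_pow, map_mul, map_pow, map_mul, ← WeylAux.prod_sq k (B ∆ B')]
      linear_combination (WeylAux.emb k (WeylAux.pZ k A)
        * (WeylAux.emb k (WeylAux.pZ k (B ∩ B')) * ∏ n ∈ B ∆ B', WeylAux.sq k n)
        + WeylAux.emb k (WeylAux.pZ k A') * WeylAux.emb k (WeylAux.pZ k B')) * h2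
    have heq : (WeylAux.pZ k A * WeylAux.pZ k (B ∩ B')) ^ 2 * WeylAux.pZ k (B ∆ B')
        = (WeylAux.pZ k A' * WeylAux.pZ k B') ^ 2 := WeylAux.emb_injective k h3
    -- B ∆ B' = ∅
    have hD : B ∆ B' = ∅ := by
      classical
      by_contra hne
      obtain ⟨a, ha⟩ := Finset.nonempty_iff_ne_empty.mpr hne
      have hcount := congrArg (fun p : Polynomial k => p.roots.count ((a : k))) heq
      have hne2 : WeylAux.pZ k A * WeylAux.pZ k (B ∩ B') ≠ 0 :=
        mul_ne_zero (WeylAux.pZ_ne_zero k _) (WeylAux.pZ_ne_zero k _)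
      have hne3 : WeylAux.pZ k A' * WeylAux.pZ k B' ≠ 0 :=
        mul_ne_zero (WeylAux.pZ_ne_zero k _) (WeylAux.pZ_ne_zero k _)
      have hne1 : (WeylAux.pZ k A * WeylAux.pZ k (B ∩ B')) ^ 2
          * WeylAux.pZ k (B ∆ B') ≠ 0 :=
        mul_ne_zero (pow_ne_zero _ hne2) (WeylAux.pZ_ne_zero k _)
      simp only [Polynomial.roots_mul hne1, Polynomial.roots_pow,
        Polynomial.roots_mul hne2, Polynomial.roots_mul hne3,
        Multiset.count_add, Multiset.count_nsmul] at hcount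
      rw [WeylAux.count_roots_pZ, WeylAux.count_roots_pZ, WeylAux.count_roots_pZ,
        WeylAux.count_roots_pZ, WeylAux.count_roots_pZ] at hcount
      rw [if_pos ha] at hcount
      split_ifs at hcount <;> omega
    have hBB' : B = B' := by
      have hbot : B ∆ B' = (⊥ : Finset ℤ) := hD
      exact symmDiff_eq_bot.mp hbot
    -- cancel to get pZ A = pZ A'
    have hpZone : WeylAux.pZ k (B ∆ B') = 1 := by
      rw [hD]
      simp [WeylAux.pZ]
    rw [hpZone, mul_one, hBB', Finset.inter_self] at heq
    have hg : WeylAux.pZ k A * WeylAux.pZ k B' = WeylAux.pZ k A' * WeylAux.pZ k B' := by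
      have hfact : (WeylAux.pZ k A * WeylAux.pZ k B' - WeylAux.pZ k A' * WeylAux.pZ k B')
          * (WeylAux.pZ k A * WeylAux.pZ k B' + WeylAux.pZ k A' * WeylAux.pZ k B') = 0 := by
        linear_combination heq
      rcases mul_eq_zero.mp hfact with h0 | h0
      · exact sub_eq_zero.mp h0
      · exfalso
        have hm1 : (WeylAux.pZ k A * WeylAux.pZ k B').Monic :=
          (WeylAux.pZ_monic k A).mul (WeylAux.pZ_monic k B')
        have hm2 : (WeylAux.pZ k A' * WeylAux.pZ k B').Monic :=
          (WeylAux.pZ_monic k A').mul (WeylAux.pZ_monic k B')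
        have hneg : WeylAux.pZ k A * WeylAux.pZ k B'
            = -(WeylAux.pZ k A' * WeylAux.pZ k B') := by linear_combination h0
        have hlc := hm1.leadingCoeff
        rw [hneg, Polynomial.leadingCoeff_neg, hm2.leadingCoeff] at hlc
        norm_num at hlc
    have hAA' : A = A' :=
      WeylAux.pZ_injective k (mul_right_cancel₀ (WeylAux.pZ_ne_zero k B') hg)
    refine ⟨hAA', ?_⟩
    have e1 : I ∪ J = A ∪ B := by
      ext a
      simp only [hA, hB, Finset.mem_union, Finset.mem_inter, Finset.mem_symmDiff]
      tauto
    have e2 : I' ∪ J' = A' ∪ B' := by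
      ext a
      simp only [hA', hB', Finset.mem_union, Finset.mem_inter, Finset.mem_symmDiff]
      tauto
    rw [e1, e2, hAA', hBB']
  · rintro ⟨hi, hu⟩
    have e : ∀ s t : Finset ℤ, xS k s * xS k t
        = (∏ i ∈ s ∪ t, xC k i) * ∏ i ∈ s ∩ t, xC k i := fun s t =>
      (Finset.prod_union_inter).symm
    rw [e, e, hi, hu]
end
end

section
/- In the ℤ_fin-graded ring C, for finite subsets I, J of ℤ, the ideal sum satisfies Cx_I + Cx_J = Cx_{I∩J}. -/
open scoped symmDiff
set_option maxHeartbeats 1000000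
set_option synthInstance.maxHeartbeats 400000
set_option linter.unusedSectionVars false

noncomputable section

variable (k : Type) [Field k]

variable [CharZero k]

lemma xC_sq (n : ℤ) : (xC k n) ^ 2 = (xC k 0) ^ 2 - (n : WeylC k) := by
  have h : (Ideal.Quotient.mk _ (MvPolynomial.X n ^ 2 + ((n : ℤ) : MvPolynomial ℤ k)
      - MvPolynomial.X 0 ^ 2 - (((0:ℤ) : ℤ) : MvPolynomial ℤ k)) : WeylC k) = 0 :=
    Ideal.Quotient.eq_zero_iff_mem.mpr (Ideal.subset_span ⟨0, n, by push_cast; ring⟩)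
  simp only [map_sub, map_add, map_pow, map_intCast] at h
  rw [xC, xC]
  push_cast at h
  linear_combination h

lemma xS_sq (A : Finset ℤ) :
    (xS k A) ^ 2 = Polynomial.aeval ((xC k 0) ^ 2) (∏ a ∈ A, (Polynomial.X - Polynomial.C ((a : k)))) := by
  rw [xS, ← Finset.prod_pow, map_prod]
  refine Finset.prod_congr rfl fun a _ => ?_
  rw [xC_sq, map_sub, Polynomial.aeval_X, Polynomial.aeval_C]
  norm_cast

lemma coprime_xS {A B : Finset ℤ} (h : Disjoint A B) :
    IsCoprime (xS k A) (xS k B) := by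
  have hc : IsCoprime (∏ a ∈ A, (Polynomial.X - Polynomial.C ((a : k))))
      (∏ b ∈ B, (Polynomial.X - Polynomial.C ((b : k)))) := by
    apply IsCoprime.prod_left
    intro a ha
    apply IsCoprime.prod_right
    intro b hb
    exact Polynomial.isCoprime_X_sub_C_of_isUnit_sub
      (by
        have : (a : k) ≠ (b : k) := by
          exact_mod_cast fun hab => (h.forall_ne_finset ha hb) (by exact_mod_cast hab)
        exact (sub_ne_zero_of_ne this).isUnit)
  have := IsCoprime.map hc (Polynomial.aeval (R := k) (A := WeylC k) ((xC k 0) ^ 2)).toRingHom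
  simp only [AlgHom.toRingHom_eq_coe, RingHom.coe_coe] at this
  rw [← xS_sq, ← xS_sq] at this
  obtain ⟨u, v, huv⟩ := this
  exact ⟨u * xS k A, v * xS k B, by ring_nf; ring_nf at huv; linear_combination huv⟩

/-- In `C`, the sum of the principal (graded) ideals satisfies
`Cx_I + Cx_J = Cx_{I∩J}`. -/
theorem ideal_sum_eq (I J : Finset ℤ) :
    Ideal.span {xS k I} ⊔ Ideal.span {xS k J} = Ideal.span {xS k (I ∩ J)} := by
  have hI : xS k I = xS k (I ∩ J) * xS k (I \ J) := by
    rw [xS, xS, xS, ← Finset.prod_union (Finset.disjoint_sdiff.mono_left Finset.inter_subset_right),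
      Finset.union_comm, Finset.sdiff_union_inter]
  have hJ : xS k J = xS k (I ∩ J) * xS k (J \ I) := by
    rw [xS, xS, xS, ← Finset.prod_union (Finset.disjoint_sdiff.mono_left Finset.inter_subset_left),
      Finset.inter_comm, Finset.union_comm, Finset.sdiff_union_inter]
  apply le_antisymm
  · apply sup_le <;> rw [Ideal.span_singleton_le_span_singleton]
    · exact ⟨xS k (I \ J), hI⟩
    · exact ⟨xS k (J \ I), hJ⟩
  · rw [Ideal.span_singleton_le_iff_mem]
    obtain ⟨a, b, hab⟩ := coprime_xS k (disjoint_sdiff_sdiff (x := I) (y := J))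
    have : xS k (I ∩ J) = a * xS k I + b * xS k J := by
      rw [hI, hJ]
      calc xS k (I ∩ J) = (a * xS k (I \ J) + b * xS k (J \ I)) * xS k (I ∩ J) := by
            rw [hab, one_mul]
        _ = a * (xS k (I ∩ J) * xS k (I \ J)) + b * (xS k (I ∩ J) * xS k (J \ I)) := by ring
    rw [this]
    exact add_mem (Ideal.mem_sup_left (Ideal.mul_mem_left _ _ (Ideal.subset_span rfl)))
      (Ideal.mem_sup_right (Ideal.mul_mem_left _ _ (Ideal.subset_span rfl)))
end
end

section
/- Every graded ideal of the ℤ_fin-graded ring C is generated by a single homogeneous element; that is, C is a graded principal ideal domain. -/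
set_option maxHeartbeats 1000000

open scoped symmDiff

noncomputable section

variable (k : Type) [Field k]

/-- An element of `C` is homogeneous if it lies in some component `C_I = C_∅ x_I`
of the `ℤ_fin`-grading. -/
def IsHomogC (c : WeylC k) : Prop := ∃ I : Finset ℤ, c ∈ Cgrade k I

open Polynomial

/-- the map k[X] → C, X ↦ x₀². -/
def alC : Polynomial k →ₐ[k] WeylC k := Polynomial.aeval (xC k 0 ^ 2)

lemma xC_mul_self (n : ℤ) : xC k n * xC k n = alC k (X - C (n : k)) := by
  have h2 : (Ideal.Quotient.mk _ (MvPolynomial.X n * MvPolynomial.X n) :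
      WeylC k) = Ideal.Quotient.mk _ (MvPolynomial.X 0 ^ 2 - (n : MvPolynomial ℤ k)) := by
    rw [Ideal.Quotient.eq]
    exact Ideal.subset_span ⟨0, n, by push_cast; ring⟩
  have h1 : xC k n * xC k n = xC k 0 ^ 2 - ((n : ℤ) : WeylC k) := by
    rw [xC, xC, ← map_mul, h2, map_sub, map_pow, map_intCast]
  rw [h1, alC, map_sub, aeval_X, aeval_C, map_intCast]

lemma xS_sdiff (A B : Finset ℤ) : xS k A = xS k (A \ B) * xS k (A ∩ B) := by
  rw [xS, xS, xS, ← Finset.prod_union (Finset.disjoint_sdiff_inter A B),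
    Finset.sdiff_union_inter]

lemma xS_mul (I J : Finset ℤ) :
    xS k I * xS k J = alC k (∏ i ∈ I ∩ J, (X - C (i : k))) * xS k (I ∆ J) := by
  have hsq : xS k (I ∩ J) * xS k (I ∩ J) = alC k (∏ i ∈ I ∩ J, (X - C (i : k))) := by
    rw [xS, ← Finset.prod_mul_distrib, map_prod]
    exact Finset.prod_congr rfl fun i _ => xC_mul_self k i
  have hsd : xS k (I ∆ J) = xS k (I \ J) * xS k (J \ I) := by
    rw [xS, xS, xS, ← Finset.prod_union disjoint_sdiff_sdiff]
    congr 1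
  have hJ : xS k J = xS k (J \ I) * xS k (I ∩ J) := by
    rw [Finset.inter_comm]; exact xS_sdiff k J I
  rw [xS_sdiff k I J, hJ, hsd, ← hsq]; ring

-- Finset identities
lemma finsetF1 (J K : Finset ℤ) : J ∩ (K ∆ J) = J \ K := by
  ext x; simp only [Finset.mem_inter, Finset.mem_symmDiff, Finset.mem_sdiff]; tauto

lemma finsetF2 (J K : Finset ℤ) : J ∆ (K ∆ J) = K := by
  rw [symmDiff_comm K J, symmDiff_symmDiff_cancel_left]

lemma finsetF3 (I J : Finset ℤ) : (I ∪ J) ∆ J = I \ J := by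
  ext x; simp only [Finset.mem_symmDiff, Finset.mem_union, Finset.mem_sdiff]; tauto

/-- L5 : multiplication moving component `J` to component `K`. -/
lemma mul_xS (g : Polynomial k) (J K : Finset ℤ) :
    (alC k g * xS k J) * xS k (K ∆ J)
      = alC k (g * ∏ j ∈ J \ K, (X - C (j : k))) * xS k K := by
  rw [mul_assoc, xS_mul, finsetF1, finsetF2, map_mul, ← mul_assoc]

lemma mul_xS_union (g : Polynomial k) (I J : Finset ℤ) :
    (alC k g * xS k J) * xS k (I \ J) = alC k g * xS k (I ∪ J) := by
  have := mul_xS k g J (I ∪ J)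
  rw [finsetF3] at this
  rw [this, Finset.sdiff_eq_empty_iff_subset.mpr Finset.subset_union_right,
    Finset.prod_empty, mul_one]

lemma mul_xC_erase (g : Polynomial k) (J : Finset ℤ) {i : ℤ} (hi : i ∈ J) :
    (alC k g * xS k J) * xC k i = alC k (g * (X - C (i : k))) * xS k (J.erase i) := by
  have hJ : xS k J = xC k i * xS k (J.erase i) := by
    rw [xS, xS, Finset.mul_prod_erase J _ hi]
  rw [hJ, map_mul]
  calc alC k g * (xC k i * xS k (J.erase i)) * xC k i
      = alC k g * (xC k i * xC k i) * xS k (J.erase i) := by ring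
    _ = alC k g * alC k (X - C (i : k)) * xS k (J.erase i) := by rw [xC_mul_self]

/-- L3 : sufficient condition for divisibility / span membership. -/
lemma mem_span_of_dvd {f g : Polynomial k} {I J : Finset ℤ}
    (h : f * ∏ i ∈ I \ J, (X - C (i : k)) ∣ g) :
    alC k g * xS k J ∈ Ideal.span {alC k f * xS k I} := by
  obtain ⟨q, hq⟩ := h
  rw [Ideal.mem_span_singleton]
  refine ⟨alC k q * xS k (J ∆ I), ?_⟩
  have hcalc : alC k f * xS k I * (alC k q * xS k (J ∆ I)) = alC k g * xS k J :=
    calc alC k f * xS k I * (alC k q * xS k (J ∆ I))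
        = (alC k (f * q) * xS k I) * xS k (J ∆ I) := by rw [map_mul]; ring
      _ = alC k (f * q * ∏ i ∈ I \ J, (X - C (i : k))) * xS k J := by rw [mul_xS]
      _ = alC k g * xS k J := by rw [hq]; ring_nf
  exact hcalc.symm

/-- L4 : description of homogeneous elements. -/
lemma isHomog_iff (c : WeylC k) :
    IsHomogC k c ↔ ∃ (g : Polynomial k) (J : Finset ℤ), c = alC k g * xS k J := by
  constructor
  · rintro ⟨J, hJ⟩
    rw [Cgrade, Submodule.mem_map] at hJ
    obtain ⟨y, hy, rfl⟩ := hJ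
    have hy' : y ∈ Cphi k := hy
    rw [Cphi, Algebra.adjoin_singleton_eq_range_aeval, AlgHom.mem_range] at hy'
    obtain ⟨g, rfl⟩ := hy'
    exact ⟨g, J, by rw [LinearMap.mulRight_apply]; rfl⟩
  · rintro ⟨g, J, rfl⟩
    refine ⟨J, Submodule.mem_map.mpr ⟨alC k g, ?_, rfl⟩⟩
    show alC k g ∈ Cphi k
    rw [Cphi, Algebra.adjoin_singleton_eq_range_aeval]
    exact ⟨g, rfl⟩

-- polynomial helpers
lemma prodlin_ne_zero (S : Finset ℤ) : (∏ i ∈ S, (X - C (i : k))) ≠ 0 :=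
  Finset.prod_ne_zero_iff.mpr fun i _ => X_sub_C_ne_zero _

lemma natDegree_prodlin (S : Finset ℤ) :
    (∏ i ∈ S, (X - C (i : k))).natDegree = S.card := by
  have h := Polynomial.natDegree_prod (s := S) (f := fun i : ℤ => X - C (i : k))
    (fun i _ => X_sub_C_ne_zero _)
  simp only [natDegree_X_sub_C] at h
  simpa using h

lemma dvd_of_natDegree_le {d f : Polynomial k} (hdf : d ∣ f) (hf : f ≠ 0)
    (hdeg : f.natDegree ≤ d.natDegree) : f ∣ d := by
  obtain ⟨q, rfl⟩ := hdf
  have hd : d ≠ 0 := left_ne_zero_of_mul hf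
  have hq : q ≠ 0 := right_ne_zero_of_mul hf
  have hdq := Polynomial.natDegree_mul hd hq
  have hq0 : q.natDegree = 0 := by omega
  obtain ⟨c, rfl⟩ := Polynomial.natDegree_eq_zero.mp hq0
  have hc : c ≠ 0 := fun hc => hq (by simp [hc])
  exact ⟨C c⁻¹, by rw [mul_assoc, ← C_mul, mul_inv_cancel₀ hc, C_1, mul_one]⟩

lemma finsetF4 {i : ℤ} {B : Finset ℤ} (hi : i ∉ B) (A : Finset ℤ) :
    B \ (A.erase i) = B \ A := by
  ext x
  simp only [Finset.mem_sdiff, Finset.mem_erase]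
  constructor
  · rintro ⟨hx, hx2⟩; exact ⟨hx, fun hxA => hx2 ⟨fun he => hi (he ▸ hx), hxA⟩⟩
  · rintro ⟨hx, hx2⟩; exact ⟨hx, fun h => hx2 h.2⟩

variable [CharZero k]

lemma lin_coprime {i j : ℤ} (h : i ≠ j) :
    IsCoprime (X - C (i : k)) (X - C (j : k)) := by
  apply Polynomial.isCoprime_X_sub_C_of_isUnit_sub
  have : (i : k) - (j : k) ≠ 0 := sub_ne_zero_of_ne (by exact_mod_cast h)
  exact this.isUnit

lemma lin_prod_coprime {S T : Finset ℤ} (h : ∀ i ∈ S, i ∉ T) :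
    IsCoprime (∏ i ∈ S, (X - C (i : k))) (∏ j ∈ T, (X - C (j : k))) :=
  IsCoprime.prod_left fun i hi =>
    IsCoprime.prod_right fun j hj => lin_coprime k (fun he => h i hi (he ▸ hj))

lemma prodlin_dvd {e : Polynomial k} : ∀ (S : Finset ℤ),
    (∀ i ∈ S, (X - C (i : k)) ∣ e) → (∏ i ∈ S, (X - C (i : k))) ∣ e := by
  intro S
  induction S using Finset.induction_on with
  | empty => intro _; simp
  | @insert i S hiS IH =>
    intro hall
    rw [Finset.prod_insert hiS]
    have hcop : IsCoprime (X - C (i : k)) (∏ j ∈ S, (X - C (j : k))) :=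
      IsCoprime.prod_right fun j hj => lin_coprime k (fun he => hiS (he ▸ hj))
    exact hcop.mul_dvd (hall i (Finset.mem_insert_self i S))
      (IH fun j hj => hall j (Finset.mem_insert_of_mem hj))

lemma comb_helper (A B u v F : Polynomial k) (K : Finset ℤ) (h : A * u + B * v = F) :
    alC k F * xS k K = (alC k A * xS k K) * alC k u + (alC k B * xS k K) * alC k v := by
  rw [← h, map_add, map_mul, map_mul]; ring

/-- The key descent step. -/
lemma Estep : ∀ (n : ℕ) (f g : Polynomial k) (I J : Finset ℤ),
    2 * f.natDegree + I.card + (2 * g.natDegree + J.card) ≤ n →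
    f ≠ 0 → g ≠ 0 →
    alC k g * xS k J ∉ Ideal.span {alC k f * xS k I} →
    ∃ (h : Polynomial k) (K : Finset ℤ), h ≠ 0 ∧
      alC k h * xS k K ∈ Ideal.span {alC k f * xS k I, alC k g * xS k J} ∧
      2 * h.natDegree + K.card < 2 * f.natDegree + I.card := by
  intro n
  classical
  induction n using Nat.strong_induction_on with
  | _ n IH =>
  intro f g I J hn hf hg hb
  have hasp : alC k f * xS k I ∈ Ideal.span {alC k f * xS k I, alC k g * xS k J} :=
    Ideal.subset_span (Set.mem_insert _ _)
  have hbsp : alC k g * xS k J ∈ Ideal.span {alC k f * xS k I, alC k g * xS k J} :=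
    Ideal.subset_span (Set.mem_insert_of_mem _ rfl)
  set πJI := ∏ j ∈ J \ I, (X - C (j : k)) with hπJI
  set πIJ := ∏ i ∈ I \ J, (X - C (i : k)) with hπIJ
  have hπJI0 : πJI ≠ 0 := prodlin_ne_zero k _
  have hπIJ0 : πIJ ≠ 0 := prodlin_ne_zero k _
  -- first euclid step
  set d₁ := EuclideanDomain.gcd f (g * πJI) with hd₁
  have hd₁f : d₁ ∣ f := EuclideanDomain.gcd_dvd_left _ _
  have hd₁0 : d₁ ≠ 0 := fun h0 => hf (EuclideanDomain.gcd_eq_zero_iff.mp h0).1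
  by_cases hdeg1 : d₁.natDegree < f.natDegree
  · -- Case 2a : the gcd is a proper divisor of f
    refine ⟨d₁, I, hd₁0, ?_, by omega⟩
    have hbx : alC k g * xS k J * xS k (I ∆ J) = alC k (g * πJI) * xS k I := by
      rw [mul_xS]
    have hc : alC k d₁ * xS k I =
        (alC k f * xS k I) * alC k (EuclideanDomain.gcdA f (g * πJI)) +
          (alC k g * xS k J * xS k (I ∆ J)) * alC k (EuclideanDomain.gcdB f (g * πJI)) := by
      rw [hbx]
      exact comb_helper k _ _ _ _ _ _ (EuclideanDomain.gcd_eq_gcd_ab f (g * πJI)).symm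
    rw [hc]
    exact Ideal.add_mem _ (Ideal.mul_mem_right _ _ hasp)
      (Ideal.mul_mem_right _ _ (Ideal.mul_mem_right _ _ hbsp))
  · -- f ∣ g * πJI
    have hfd : f ∣ g * πJI :=
      dvd_trans (dvd_of_natDegree_le k hd₁f hf
        (le_of_not_gt fun h2 => hdeg1 (lt_of_le_of_ne
          (Polynomial.natDegree_le_of_dvd hd₁f hf) (by omega))))
        (EuclideanDomain.gcd_dvd_right _ _)
    obtain ⟨e, he⟩ := hfd
    by_cases hex : ∃ i ∈ I \ J, ¬ (X - C (i : k)) ∣ e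
    · -- Case 2b-i
      obtain ⟨i₀, hi₀IJ, hnd⟩ := hex
      have hi₀I : i₀ ∈ I := (Finset.mem_sdiff.mp hi₀IJ).1
      have hi₀J : i₀ ∉ J := (Finset.mem_sdiff.mp hi₀IJ).2
      obtain ⟨u, v, huv⟩ := (Polynomial.prime_X_sub_C ((i₀ : k))).coprime_iff_not_dvd.mpr hnd
      refine ⟨f, I.erase i₀, hf, ?_, ?_⟩
      · have h1 : alC k f * xS k I * xC k i₀
            = alC k (f * (X - C (i₀ : k))) * xS k (I.erase i₀) := mul_xC_erase k f I hi₀I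
        have h2 : alC k g * xS k J * xS k ((I.erase i₀) ∆ J)
            = alC k (g * πJI) * xS k (I.erase i₀) := by
          rw [mul_xS, finsetF4 hi₀J]
        have hc : alC k f * xS k (I.erase i₀) =
            (alC k f * xS k I * xC k i₀) * alC k u +
              (alC k g * xS k J * xS k ((I.erase i₀) ∆ J)) * alC k v := by
          rw [h1, h2, he]
          exact comb_helper k _ _ _ _ _ _ (by linear_combination f * huv)
        rw [hc]
        exact Ideal.add_mem _
          (Ideal.mul_mem_right _ _ (Ideal.mul_mem_right _ _ hasp))
          (Ideal.mul_mem_right _ _ (Ideal.mul_mem_right _ _ hbsp))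
      · have hc1 : I.card ≥ 1 := Finset.card_pos.mpr ⟨i₀, hi₀I⟩
        rw [Finset.card_erase_of_mem hi₀I]
        omega
    · push_neg at hex
      have hπe : πIJ ∣ e := prodlin_dvd k _ hex
      -- second euclid step
      set d₂ := EuclideanDomain.gcd g (f * πIJ) with hd₂
      have hd₂g : d₂ ∣ g := EuclideanDomain.gcd_dvd_left _ _
      have hd₂0 : d₂ ≠ 0 := fun h0 => hg (EuclideanDomain.gcd_eq_zero_iff.mp h0).1
      by_cases hdeg2 : d₂.natDegree < g.natDegree
      · -- Case A : recurse with (f, I, d₂, J)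
        have hax : alC k f * xS k I * xS k (J ∆ I) = alC k (f * πIJ) * xS k J := by
          rw [mul_xS]
        have hc₂ : alC k d₂ * xS k J =
            (alC k g * xS k J) * alC k (EuclideanDomain.gcdA g (f * πIJ)) +
              (alC k f * xS k I * xS k (J ∆ I)) * alC k (EuclideanDomain.gcdB g (f * πIJ)) := by
          rw [hax]
          exact comb_helper k _ _ _ _ _ _ (EuclideanDomain.gcd_eq_gcd_ab g (f * πIJ)).symm
        have hc₂mem : alC k d₂ * xS k J ∈
            Ideal.span {alC k f * xS k I, alC k g * xS k J} := by
          rw [hc₂]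
          exact Ideal.add_mem _ (Ideal.mul_mem_right _ _ hbsp)
            (Ideal.mul_mem_right _ _ (Ideal.mul_mem_right _ _ hasp))
        have hbc₂ : alC k g * xS k J ∈ Ideal.span {alC k d₂ * xS k J} := by
          apply mem_span_of_dvd
          rw [Finset.sdiff_self, Finset.prod_empty, mul_one]
          exact hd₂g
        have hprec : alC k d₂ * xS k J ∉ Ideal.span {alC k f * xS k I} := by
          intro hmem
          exact hb (Ideal.span_le.mpr (Set.singleton_subset_iff.mpr hmem) hbc₂)
        obtain ⟨h, K, hh0, hhmem, hhlt⟩ :=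
          IH (2 * f.natDegree + I.card + (2 * d₂.natDegree + J.card)) (by omega)
            f d₂ I J (le_refl _) hf hd₂0 hprec
        refine ⟨h, K, hh0, ?_, hhlt⟩
        have hle : Ideal.span {alC k f * xS k I, alC k d₂ * xS k J} ≤
            Ideal.span {alC k f * xS k I, alC k g * xS k J} :=
          Ideal.span_le.mpr (Set.insert_subset_iff.mpr
            ⟨hasp, Set.singleton_subset_iff.mpr hc₂mem⟩)
        exact hle hhmem
      · -- g ∣ f * πIJ
        have hgd : g ∣ f * πIJ :=
          dvd_trans (dvd_of_natDegree_le k hd₂g hg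
            (le_of_not_gt fun h2 => hdeg2 (lt_of_le_of_ne
              (Polynomial.natDegree_le_of_dvd hd₂g hg) (by omega))))
            (EuclideanDomain.gcd_dvd_right _ _)
        obtain ⟨e₂, he₂⟩ := hgd
        by_cases hex2 : ∃ j ∈ J \ I, ¬ (X - C (j : k)) ∣ e₂
        · -- Case B-i : recurse with (f, I, g, J.erase j₀)
          obtain ⟨j₀, hj₀JI, hnd2⟩ := hex2
          have hj₀J : j₀ ∈ J := (Finset.mem_sdiff.mp hj₀JI).1
          have hj₀I : j₀ ∉ I := (Finset.mem_sdiff.mp hj₀JI).2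
          obtain ⟨u, v, huv⟩ :=
            (Polynomial.prime_X_sub_C ((j₀ : k))).coprime_iff_not_dvd.mpr hnd2
          have h1 : alC k g * xS k J * xC k j₀
              = alC k (g * (X - C (j₀ : k))) * xS k (J.erase j₀) := mul_xC_erase k g J hj₀J
          have h2 : alC k f * xS k I * xS k ((J.erase j₀) ∆ I)
              = alC k (f * πIJ) * xS k (J.erase j₀) := by
            rw [mul_xS, finsetF4 hj₀I]
          have hc : alC k g * xS k (J.erase j₀) =
              (alC k g * xS k J * xC k j₀) * alC k u +
                (alC k f * xS k I * xS k ((J.erase j₀) ∆ I)) * alC k v := by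
            rw [h1, h2, he₂]
            exact comb_helper k _ _ _ _ _ _ (by linear_combination g * huv)
          have hcmem : alC k g * xS k (J.erase j₀) ∈
              Ideal.span {alC k f * xS k I, alC k g * xS k J} := by
            rw [hc]
            exact Ideal.add_mem _
              (Ideal.mul_mem_right _ _ (Ideal.mul_mem_right _ _ hbsp))
              (Ideal.mul_mem_right _ _ (Ideal.mul_mem_right _ _ hasp))
          have hbthis : alC k g * xS k J = (alC k g * xS k (J.erase j₀)) * xC k j₀ := by
            rw [mul_assoc, xS, xS, Finset.prod_erase_mul J _ hj₀J]
          have hprec : alC k g * xS k (J.erase j₀) ∉ Ideal.span {alC k f * xS k I} := by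
            intro hmem
            exact hb (hbthis ▸ Ideal.mul_mem_right _ _ hmem)
          have hcard : (J.erase j₀).card + 1 = J.card := by
            rw [Finset.card_erase_of_mem hj₀J]
            have : J.card ≥ 1 := Finset.card_pos.mpr ⟨j₀, hj₀J⟩
            omega
          obtain ⟨h, K, hh0, hhmem, hhlt⟩ :=
            IH (2 * f.natDegree + I.card + (2 * g.natDegree + (J.erase j₀).card))
              (by omega) f g I (J.erase j₀) (le_refl _) hf hg hprec
          refine ⟨h, K, hh0, ?_, hhlt⟩
          have hle : Ideal.span {alC k f * xS k I, alC k g * xS k (J.erase j₀)} ≤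
              Ideal.span {alC k f * xS k I, alC k g * xS k J} :=
            Ideal.span_le.mpr (Set.insert_subset_iff.mpr
              ⟨hasp, Set.singleton_subset_iff.mpr hcmem⟩)
          exact hle hhmem
        · -- Case B-ii : the merge move
          push_neg at hex2
          have hπe₂ : πJI ∣ e₂ := prodlin_dvd k _ hex2
          obtain ⟨et, het⟩ := hπe
          obtain ⟨e2p, he2p⟩ := hπe₂
          have hgπ0 : g * πJI ≠ 0 := mul_ne_zero hg hπJI0
          have hunit : e2p * et = 1 := by
            have h1 : g * πJI * 1 = g * πJI * (e2p * et) := by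
              rw [mul_one]
              calc g * πJI = f * e := he
                _ = f * (πIJ * et) := by rw [het]
                _ = (f * πIJ) * et := by ring
                _ = (g * e₂) * et := by rw [he₂]
                _ = (g * (πJI * e2p)) * et := by rw [he2p]
                _ = g * πJI * (e2p * et) := by ring
            exact (mul_left_cancel₀ hgπ0 h1).symm
          -- J \ I is nonempty
          by_cases hJIe : J \ I = ∅
          · exfalso
            apply hb
            apply mem_span_of_dvd
            refine ⟨et, ?_⟩
            have : πJI = 1 := by rw [hπJI, hJIe, Finset.prod_empty]
            calc g = g * πJI := by rw [this, mul_one]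
              _ = f * (πIJ * et) := by rw [he, het]
              _ = f * πIJ * et := by ring
          · have hJIne : (J \ I).Nonempty := Finset.nonempty_iff_ne_empty.mpr hJIe
            have hcop : IsCoprime πIJ πJI :=
              lin_prod_coprime k fun i hi => by
                intro hiJ
                exact (Finset.mem_sdiff.mp hi).2 (Finset.mem_sdiff.mp hiJ).1
            -- πIJ ∣ g
            have hπIJg : πIJ ∣ g := by
              apply hcop.dvd_of_dvd_mul_right
              exact ⟨f * et, by rw [he, het]; ring⟩
            obtain ⟨g₁, hg₁⟩ := hπIJg
            -- cancel πIJ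
            have hcanc : g₁ * πJI = f * et := by
              apply mul_left_cancel₀ hπIJ0
              calc πIJ * (g₁ * πJI) = (πIJ * g₁) * πJI := by ring
                _ = g * πJI := by rw [← hg₁]
                _ = f * (πIJ * et) := by rw [he, het]
                _ = πIJ * (f * et) := by ring
            -- f = πJI * f₁
            have hfeq : f = πJI * (g₁ * e2p) := by
              calc f = f * (et * e2p) := by rw [mul_comm et e2p, hunit, mul_one]
                _ = (f * et) * e2p := by ring
                _ = (g₁ * πJI) * e2p := by rw [hcanc]
                _ = πJI * (g₁ * e2p) := by ring
            set f₁ := g₁ * e2p with hf₁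
            have hf₁0 : f₁ ≠ 0 := by
              intro h0
              exact hf (by rw [hfeq, h0, mul_zero])
            -- bezout combination : f₁ = (g * e2p) * u + f * v
            obtain ⟨u, v, huv⟩ := hcop
            have hh1 : g * e2p = f₁ * πIJ := by rw [hf₁, hg₁]; ring
            have hh2 : f = f₁ * πJI := by rw [hfeq]; ring
            have hcomb : g * (e2p * u) + f * v = f₁ := by
              linear_combination u * hh1 + v * hh2 + f₁ * huv
            refine ⟨f₁, I ∪ J, hf₁0, ?_, ?_⟩
            · have hb1 : alC k g * xS k J * xS k (I \ J) = alC k g * xS k (I ∪ J) :=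
                mul_xS_union k g I J
              have ha1 : alC k f * xS k I * xS k (J \ I) = alC k f * xS k (I ∪ J) := by
                rw [mul_xS_union k f J I, Finset.union_comm]
              have hc : alC k f₁ * xS k (I ∪ J) =
                  (alC k g * xS k J * xS k (I \ J)) * alC k (e2p * u) +
                    (alC k f * xS k I * xS k (J \ I)) * alC k v := by
                rw [hb1, ha1]
                exact comb_helper k _ _ _ _ _ _ hcomb
              rw [hc]
              exact Ideal.add_mem _
                (Ideal.mul_mem_right _ _ (Ideal.mul_mem_right _ _ hbsp))
                (Ideal.mul_mem_right _ _ (Ideal.mul_mem_right _ _ hasp))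
            · have hdegf : f.natDegree = (J \ I).card + f₁.natDegree := by
                rw [hfeq, Polynomial.natDegree_mul hπJI0 hf₁0,
                  hπJI, natDegree_prodlin]
              have hcardu : (I ∪ J).card = I.card + (J \ I).card := by
                rw [← Finset.union_sdiff_self_eq_union, Finset.card_union_of_disjoint
                  Finset.sdiff_disjoint.symm]
              have hJIc : (J \ I).card ≥ 1 := Finset.card_pos.mpr hJIne
              omega

/-- Every graded ideal of the `ℤ_fin`-graded ring `C` (an ideal
generated by its homogeneous elements) is generated by a single homogeneous
element: `C` is a graded principal ideal domain. -/
theorem graded_ideal_principal (𝔞 : Ideal (WeylC k))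
    (h : 𝔞 = Ideal.span {c : WeylC k | c ∈ 𝔞 ∧ IsHomogC k c}) :
    ∃ c : WeylC k, IsHomogC k c ∧ 𝔞 = Ideal.span {c} := by
  classical
  have hzero : IsHomogC k (0 : WeylC k) := ⟨∅, Submodule.zero_mem _⟩
  by_cases hex : ∃ (f : Polynomial k) (I : Finset ℤ), f ≠ 0 ∧ alC k f * xS k I ∈ 𝔞
  · have hPex : ∃ n : ℕ, ∃ (f : Polynomial k) (I : Finset ℤ),
        f ≠ 0 ∧ alC k f * xS k I ∈ 𝔞 ∧ 2 * f.natDegree + I.card = n := by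
      obtain ⟨f, I, hf, hm⟩ := hex
      exact ⟨_, f, I, hf, hm, rfl⟩
    obtain ⟨f, I, hf, hmem, hmeas⟩ := Nat.find_spec hPex
    refine ⟨alC k f * xS k I, (isHomog_iff k _).mpr ⟨f, I, rfl⟩, ?_⟩
    apply le_antisymm
    · conv_lhs => rw [h]
      apply Ideal.span_le.mpr
      rintro b ⟨hbmem, hbhom⟩
      obtain ⟨g, J, rfl⟩ := (isHomog_iff k b).mp hbhom
      by_cases hg : g = 0
      · rw [hg, map_zero, zero_mul]
        exact Submodule.zero_mem _
      by_contra hbnot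
      obtain ⟨h', K, hh0, hmem', hlt⟩ := Estep k _ f g I J (le_refl _) hf hg hbnot
      have hK𝔞 : alC k h' * xS k K ∈ 𝔞 := by
        refine Ideal.span_le.mpr ?_ hmem'
        exact Set.insert_subset_iff.mpr ⟨hmem, Set.singleton_subset_iff.mpr hbmem⟩
      exact Nat.find_min hPex (by omega) ⟨h', K, hh0, hK𝔞, rfl⟩
    · apply Ideal.span_le.mpr
      exact Set.singleton_subset_iff.mpr hmem
  · refine ⟨0, hzero, ?_⟩
    rw [h]
    have hset : {c : WeylC k | c ∈ 𝔞 ∧ IsHomogC k c} = {0} := by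
      ext b
      simp only [Set.mem_setOf_eq, Set.mem_singleton_iff]
      constructor
      · rintro ⟨hbm, hbh⟩
        obtain ⟨g, J, rfl⟩ := (isHomog_iff k b).mp hbh
        by_cases hg : g = 0
        · rw [hg, map_zero, zero_mul]
        · exact absurd ⟨g, J, hg, hbm⟩ hex
      · rintro rfl
        exact ⟨𝔞.zero_mem, hzero⟩
    rw [hset]
end
end

section
/- The ring C = k[x_n : n ∈ ℤ]/(x_n² + n = x_m² + m) is not Noetherian: the chain of ideals 𝔞_N generated by {x_d + √(−d) : d ≤ N} (over an algebraically closed field k) is strictly increasing. -/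
open scoped symmDiff

set_option maxHeartbeats 1000000
set_option synthInstance.maxHeartbeats 400000

noncomputable section

variable (k : Type) [Field k]

variable [CharZero k]

/-- Lifting a compatible family of square roots to an algebra hom out of `C`. -/
noncomputable def weylLift (A : Type) [CommRing A] [Algebra k A] (e : ℤ → A)
    (he : ∀ n : ℤ, e n ^ 2 = -(n : A)) : WeylC k →ₐ[k] A :=
  Ideal.Quotient.liftₐ _ (MvPolynomial.aeval e) (by
    intro a ha
    suffices h : a ∈ RingHom.ker (MvPolynomial.aeval e : MvPolynomial ℤ k →ₐ[k] A).toRingHom from h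
    refine Ideal.span_le.mpr ?_ ha
    rintro p ⟨m, n, rfl⟩
    simp only [SetLike.mem_coe, RingHom.mem_ker, map_sub, map_add, map_pow,
      MvPolynomial.aeval_X, map_intCast, he, AlgHom.toRingHom_eq_coe, RingHom.coe_coe]
    ring)

theorem weylLift_x (A : Type) [CommRing A] [Algebra k A] (e : ℤ → A)
    (he : ∀ n : ℤ, e n ^ 2 = -(n : A)) (n : ℤ) :
    weylLift k A e he (xC k n) = e n := by
  exact MvPolynomial.aeval_X e n

theorem weylC_not_mem (s : ℤ → k) (N : ℤ) (A : Type) [CommRing A] [Algebra k A]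
    (e : ℤ → A) (he : ∀ n : ℤ, e n ^ 2 = -(n : A))
    (h0 : ∀ d : ℤ, d ≤ N → e d + algebraMap k A (s d) = 0)
    (h1 : e (N + 1) + algebraMap k A (s (N + 1)) ≠ 0) :
    xC k (N + 1) + algebraMap k (WeylC k) (s (N + 1)) ∉
      Ideal.span {c : WeylC k | ∃ d : ℤ, d ≤ N ∧ c = xC k d + algebraMap k (WeylC k) (s d)} := by
  intro hmem
  have hker : Ideal.span {c : WeylC k | ∃ d : ℤ, d ≤ N ∧
      c = xC k d + algebraMap k (WeylC k) (s d)} ≤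
      RingHom.ker (weylLift k A e he).toRingHom := by
    refine Ideal.span_le.mpr ?_
    rintro c ⟨d, hd, rfl⟩
    have hz : weylLift k A e he (xC k d + algebraMap k (WeylC k) (s d)) = 0 := by
      rw [map_add, weylLift_x, AlgHom.commutes]
      exact h0 d hd
    simpa [RingHom.mem_ker] using hz
  have hz : weylLift k A e he (xC k (N + 1) + algebraMap k (WeylC k) (s (N + 1))) = 0 :=
    hker hmem
  rw [map_add, weylLift_x, AlgHom.commutes] at hz
  exact h1 hz

theorem weylC_chain (s : ℤ → k) (hs : ∀ d : ℤ, s d ^ 2 = (-d : k)) (N : ℤ) :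
    Ideal.span {c : WeylC k | ∃ d : ℤ, d ≤ N ∧ c = xC k d + algebraMap k (WeylC k) (s d)} <
    Ideal.span {c : WeylC k | ∃ d : ℤ, d ≤ N + 1 ∧ c = xC k d + algebraMap k (WeylC k) (s d)} := by
  have hle : Ideal.span {c : WeylC k | ∃ d : ℤ, d ≤ N ∧ c = xC k d + algebraMap k (WeylC k) (s d)} ≤
      Ideal.span {c : WeylC k | ∃ d : ℤ, d ≤ N + 1 ∧ c = xC k d + algebraMap k (WeylC k) (s d)} := by
    refine Ideal.span_mono ?_
    rintro c ⟨d, hd, rfl⟩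
    exact ⟨d, by linarith, rfl⟩
  have hmem : xC k (N + 1) + algebraMap k (WeylC k) (s (N + 1)) ∈
      Ideal.span {c : WeylC k | ∃ d : ℤ, d ≤ N + 1 ∧ c = xC k d + algebraMap k (WeylC k) (s d)} :=
    Ideal.subset_span ⟨N + 1, le_refl _, rfl⟩
  have hnot : xC k (N + 1) + algebraMap k (WeylC k) (s (N + 1)) ∉
      Ideal.span {c : WeylC k | ∃ d : ℤ, d ≤ N ∧ c = xC k d + algebraMap k (WeylC k) (s d)} := by
    by_cases hN : N = -1
    · subst hN
      refine weylC_not_mem k s (-1) (DualNumber k)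
        (fun d => if d = 0 then DualNumber.eps else TrivSqZeroExt.inl (-(s d))) ?_ ?_ ?_
      · intro n
        by_cases h : n = 0
        · subst h
          simp [sq, DualNumber.eps_mul_eps]
        · have hcast : ((n : ℤ) : DualNumber k) = TrivSqZeroExt.inl ((n : ℤ) : k) := by
            rw [← map_intCast (algebraMap k (DualNumber k)) n, TrivSqZeroExt.algebraMap_eq_inl]
          beta_reduce
          rw [if_neg h, TrivSqZeroExt.inl_pow, neg_sq, hs, hcast, TrivSqZeroExt.inl_neg]
      · intro d hd
        have h : d ≠ 0 := by omega
        simp only [h, if_false, TrivSqZeroExt.algebraMap_eq_inl, TrivSqZeroExt.inl_neg]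
        ring
      · have hs0 : s 0 = 0 := by
          have := hs 0
          simp only [Int.cast_zero, neg_zero] at this
          exact pow_eq_zero_iff (by norm_num) |>.mp this
        simp only [show (-1 : ℤ) + 1 = 0 by ring, if_pos rfl, hs0, map_zero, add_zero]
        intro h
        have := congrArg TrivSqZeroExt.snd h
        simpa using this
    · refine weylC_not_mem k s N k (fun d => if d = N + 1 then s d else -(s d)) ?_ ?_ ?_
      · intro n
        by_cases h : n = N + 1 <;> simp [h, neg_sq, hs]
      · intro d hd
        have h : d ≠ N + 1 := by omega
        simp [h, Algebra.algebraMap_self_apply]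
      · beta_reduce
        rw [if_pos rfl, Algebra.algebraMap_self_apply]
        have hsne : s (N + 1) ≠ 0 := by
          intro h
          have h5 := hs (N + 1)
          rw [h] at h5
          have h6 : ((N + 1 : ℤ) : k) = 0 := by
            have : -((N + 1 : ℤ) : k) = 0 := by rw [← h5]; ring
            exact neg_eq_zero.mp this
          have h4 : (N + 1 : ℤ) = 0 := by exact_mod_cast h6
          omega
        intro h
        apply hsne
        have h2 : (2 : k) * s (N + 1) = 0 := by linear_combination h
        exact (mul_eq_zero.mp h2).resolve_left two_ne_zero
  exact lt_of_le_of_ne hle (fun h => hnot (h ▸ hmem))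

/-- Over an algebraically closed field `k` (with chosen square
roots `s d` of `−d`), the chain of ideals `𝔞_N` of `C` generated by
`{x_d + √(−d) : d ≤ N}` is strictly increasing; in particular `C` is not
Noetherian. -/
theorem weylC_not_noetherian [IsAlgClosed k] (s : ℤ → k) (hs : ∀ d : ℤ, s d ^ 2 = (-d : k)) :
    (∀ N : ℤ,
      Ideal.span {c : WeylC k | ∃ d : ℤ, d ≤ N ∧ c = xC k d + algebraMap k (WeylC k) (s d)} <
      Ideal.span {c : WeylC k | ∃ d : ℤ, d ≤ N + 1 ∧ c = xC k d + algebraMap k (WeylC k) (s d)}) ∧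
    ¬ IsNoetherianRing (WeylC k) := by
  refine ⟨weylC_chain k s hs, ?_⟩
  intro hN
  have hNoeth : IsNoetherian (WeylC k) (WeylC k) := isNoetherianRing_iff.mp hN
  let f : ℕ →o Ideal (WeylC k) :=
    ⟨fun n => Ideal.span {c : WeylC k | ∃ d : ℤ, d ≤ (n : ℤ) ∧
        c = xC k d + algebraMap k (WeylC k) (s d)}, by
      intro a b hab
      refine Ideal.span_mono ?_
      rintro c ⟨d, hd, rfl⟩
      refine ⟨d, hd.trans ?_, rfl⟩
      exact_mod_cast hab⟩
  obtain ⟨n, hn⟩ := monotone_stabilizes_iff_noetherian.mpr hNoeth f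
  have h2 := hn (n + 1) (Nat.le_succ n)
  have hlt := weylC_chain k s hs (n : ℤ)
  apply hlt.ne
  have h3 : f (n + 1) = Ideal.span {c : WeylC k | ∃ d : ℤ, d ≤ (n : ℤ) + 1 ∧
      c = xC k d + algebraMap k (WeylC k) (s d)} := by
    show Ideal.span {c : WeylC k | ∃ d : ℤ, d ≤ ((n + 1 : ℕ) : ℤ) ∧
      c = xC k d + algebraMap k (WeylC k) (s d)} = _
    norm_cast
  exact h2.trans h3
end
end
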